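/- Let P and P̃ be non-degenerate k×k real matrices with P̃ᵀP̃ = PᵀP + E. Then there exists a linear isometry Φ : ℝ^k → ℝ^k such that ‖P̃P⁻¹ − Φ‖ ≤ σ_1(E) / σ_k(P)², where σ_1 denotes the largest and σ_k the smallest singular value, and ‖·‖ the operator norm. -/

import Mathlib

noncomputable section

open Metric Matrix

/-- The largest singular value (operator norm w.r.t. Euclidean norms) of a matrix. -/
def largestSing {m k : ℕ} (P : Matrix (Fin m) (Fin k) ℝ) : ℝ :=
  sSup { r : ℝ | ∃ x : EuclideanSpace ℝ (Fin k), ‖x‖ = 1 ∧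
    r = ‖(EuclideanSpace.equiv (Fin m) ℝ).symm (P.mulVec (EuclideanSpace.equiv (Fin k) ℝ x))‖ }

/-- The smallest singular value of a matrix. -/
def smallestSing {m k : ℕ} (P : Matrix (Fin m) (Fin k) ℝ) : ℝ :=
  sInf { r : ℝ | ∃ x : EuclideanSpace ℝ (Fin k), ‖x‖ = 1 ∧
    r = ‖(EuclideanSpace.equiv (Fin m) ℝ).symm (P.mulVec (EuclideanSpace.equiv (Fin k) ℝ x))‖ }

namespace LinearDistortionAux

open scoped Matrix.Norms.L2Operator

/-- The continuous linear map on Euclidean spaces associated to a matrix. -/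
def fCLM {m k : ℕ} (M : Matrix (Fin m) (Fin k) ℝ) :
    EuclideanSpace ℝ (Fin k) →L[ℝ] EuclideanSpace ℝ (Fin m) :=
  (Matrix.toEuclideanLin.trans LinearMap.toContinuousLinearMap) M

lemma fCLM_apply {m k : ℕ} (M : Matrix (Fin m) (Fin k) ℝ) (x : EuclideanSpace ℝ (Fin k)) :
    fCLM M x = (EuclideanSpace.equiv (Fin m) ℝ).symm
      (M.mulVec (EuclideanSpace.equiv (Fin k) ℝ x)) := rfl

lemma norm_fCLM {m k : ℕ} (M : Matrix (Fin m) (Fin k) ℝ) : ‖M‖ = ‖fCLM M‖ := rfl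

lemma fCLM_mul {m k l : ℕ} (A : Matrix (Fin m) (Fin k) ℝ) (B : Matrix (Fin k) (Fin l) ℝ)
    (x : EuclideanSpace ℝ (Fin l)) : fCLM (A * B) x = fCLM A (fCLM B x) := by
  simp only [fCLM_apply, ContinuousLinearEquiv.apply_symm_apply, Matrix.mulVec_mulVec]

lemma real_ct {m k : ℕ} (A : Matrix (Fin m) (Fin k) ℝ) : Aᴴ = Aᵀ := by
  ext i j; simp [Matrix.conjTranspose_apply]

lemma singSet_eq {m k : ℕ} (M : Matrix (Fin m) (Fin k) ℝ) :
    { r : ℝ | ∃ x : EuclideanSpace ℝ (Fin k), ‖x‖ = 1 ∧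
      r = ‖(EuclideanSpace.equiv (Fin m) ℝ).symm (M.mulVec (EuclideanSpace.equiv (Fin k) ℝ x))‖ }
    = { r : ℝ | ∃ x : EuclideanSpace ℝ (Fin k), ‖x‖ = 1 ∧ r = ‖fCLM M x‖ } := rfl

lemma bddAbove_singSet {m k : ℕ} (M : Matrix (Fin m) (Fin k) ℝ) :
    BddAbove { r : ℝ | ∃ x : EuclideanSpace ℝ (Fin k), ‖x‖ = 1 ∧ r = ‖fCLM M x‖ } := by
  refine ⟨‖fCLM M‖, ?_⟩
  rintro r ⟨x, hx, rfl⟩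
  simpa [hx] using (fCLM M).le_opNorm x

lemma largestSing_eq_norm {m k : ℕ} (hk : 0 < k) (M : Matrix (Fin m) (Fin k) ℝ) :
    largestSing M = ‖M‖ := by
  obtain ⟨n, rfl⟩ := Nat.exists_eq_succ_of_ne_zero hk.ne'
  have hnt : Nontrivial (EuclideanSpace ℝ (Fin (n + 1))) :=
    ⟨0, EuclideanSpace.single 0 1, by intro h; simpa using congrFun (congrArg (WithLp.equiv 2 _) h) 0⟩
  rw [largestSing, singSet_eq]
  have hne : ∃ x : EuclideanSpace ℝ (Fin (n + 1)), ‖x‖ = 1 := exists_norm_eq _ zero_le_one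
  obtain ⟨x₀, hx₀⟩ := hne
  refine le_antisymm ?_ ?_
  · refine csSup_le ⟨‖fCLM M x₀‖, ⟨x₀, hx₀, rfl⟩⟩ ?_
    rintro r ⟨x, hx, rfl⟩
    rw [norm_fCLM]; simpa [hx] using (fCLM M).le_opNorm x
  · rw [norm_fCLM]
    refine (fCLM M).opNorm_le_bound ?_ ?_
    · exact le_trans (norm_nonneg _) (le_csSup (bddAbove_singSet M) ⟨x₀, hx₀, rfl⟩)
    · intro x
      rcases eq_or_ne x 0 with rfl | hx
      · simp
      · have hxn : ‖x‖ ≠ 0 := norm_ne_zero_iff.mpr hx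
        have hu : ‖(‖x‖⁻¹ • x : EuclideanSpace ℝ (Fin (n+1)))‖ = 1 := by
          simp [norm_smul, abs_of_nonneg (inv_nonneg.mpr (norm_nonneg x)), inv_mul_cancel₀ hxn]
        have h1 : ‖fCLM M (‖x‖⁻¹ • x)‖ ≤ sSup _ :=
          le_csSup (bddAbove_singSet M) ⟨_, hu, rfl⟩
        have h2 : ‖fCLM M (‖x‖⁻¹ • x)‖ = ‖x‖⁻¹ * ‖fCLM M x‖ := by
          simp [_root_.map_smul, norm_smul, abs_of_nonneg (inv_nonneg.mpr (norm_nonneg x))]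
        rw [h2] at h1
        calc ‖fCLM M x‖ = ‖x‖ * (‖x‖⁻¹ * ‖fCLM M x‖) := by field_simp
        _ ≤ ‖x‖ * sSup _ := by gcongr
        _ = _ := mul_comm _ _

lemma smallestSing_pos {k : ℕ} (hk : 0 < k) {P : Matrix (Fin k) (Fin k) ℝ} (hP : IsUnit P) :
    0 < smallestSing P := by
  obtain ⟨n, rfl⟩ := Nat.exists_eq_succ_of_ne_zero hk.ne'
  obtain ⟨x₀, hx₀, hmin⟩ := (isCompact_sphere (0 : EuclideanSpace ℝ (Fin (n+1))) 1).exists_isMinOn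
    ⟨EuclideanSpace.single 0 1, by simp [mem_sphere_iff_norm]⟩
    (Continuous.continuousOn (by continuity : Continuous fun x => ‖fCLM P x‖))
  have hx₀1 : ‖x₀‖ = 1 := by simpa [mem_sphere_iff_norm] using hx₀
  have hpos : 0 < ‖fCLM P x₀‖ := by
    rw [norm_pos_iff]
    intro h0
    have hinj : Function.Injective (fCLM P) := by
      intro a b hab
      have := congrArg (EuclideanSpace.equiv (Fin (n+1)) ℝ) hab
      simp only [fCLM_apply, ContinuousLinearEquiv.apply_symm_apply] at this
      have := Matrix.mulVec_injective_iff_isUnit.mpr hP this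
      exact (EuclideanSpace.equiv (Fin (n+1)) ℝ).injective this
    have : x₀ = 0 := hinj (by simpa using h0)
    rw [this] at hx₀1; simp at hx₀1
  rw [smallestSing, singSet_eq]
  refine lt_of_lt_of_le hpos (le_csInf ⟨‖fCLM P x₀‖, ⟨x₀, hx₀1, rfl⟩⟩ ?_)
  rintro r ⟨x, hx, rfl⟩
  exact hmin (by simp [mem_sphere_iff_norm, hx])

lemma smallestSing_le {k : ℕ} (P : Matrix (Fin k) (Fin k) ℝ) (x : EuclideanSpace ℝ (Fin k))
    (hx : ‖x‖ = 1) : smallestSing P ≤ ‖fCLM P x‖ := by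
  rw [smallestSing, singSet_eq]
  refine csInf_le ⟨0, ?_⟩ ⟨x, hx, rfl⟩
  rintro r ⟨y, hy, rfl⟩; exact norm_nonneg _

/-- Bound on the operator norm of the inverse by the smallest singular value. -/
lemma norm_inv_le {k : ℕ} (hk : 0 < k) {P : Matrix (Fin k) (Fin k) ℝ} (hP : IsUnit P) :
    ‖P⁻¹‖ ≤ 1 / smallestSing P := by
  have hs := smallestSing_pos hk hP
  have hPd : IsUnit P.det := (Matrix.isUnit_iff_isUnit_det _).mp hP
  rw [norm_fCLM]
  refine ContinuousLinearMap.opNorm_le_bound _ (by positivity) fun y => ?_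
  set x := fCLM P⁻¹ y with hxdef
  have hPx : fCLM P x = y := by
    rw [hxdef, ← fCLM_mul, Matrix.mul_nonsing_inv _ hPd]
    simp [fCLM_apply]
  rcases eq_or_ne x 0 with hx0 | hx0
  · rw [hx0]; simp; positivity
  · have hxn : ‖x‖ ≠ 0 := norm_ne_zero_iff.mpr hx0
    have hu : ‖(‖x‖⁻¹ • x : EuclideanSpace ℝ (Fin k))‖ = 1 := by
      simp [norm_smul, abs_of_nonneg (inv_nonneg.mpr (norm_nonneg x)), inv_mul_cancel₀ hxn]
    have h1 : smallestSing P ≤ ‖fCLM P (‖x‖⁻¹ • x)‖ := smallestSing_le P _ hu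
    have h2 : ‖fCLM P (‖x‖⁻¹ • x)‖ = ‖x‖⁻¹ * ‖y‖ := by
      rw [_root_.map_smul, norm_smul, hPx]
      simp [abs_of_nonneg (inv_nonneg.mpr (norm_nonneg x))]
    rw [h2] at h1
    rw [div_mul_eq_mul_div, le_div_iff₀ hs]
    have := mul_le_mul_of_nonneg_left h1 (mul_nonneg (norm_nonneg x) hs.le)
    calc ‖x‖ * smallestSing P ≤ ‖x‖ * (‖x‖⁻¹ * ‖y‖) := by gcongr
    _ = ‖y‖ := by field_simp
    _ = 1 * ‖y‖ := (one_mul _).symm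

/-- norm is preserved by left multiplication by an orthogonal matrix -/
lemma norm_orth_mul {k : ℕ} {Φ : Matrix (Fin k) (Fin k) ℝ} (hΦ : Φᴴ * Φ = 1)
    (M : Matrix (Fin k) (Fin k) ℝ) : ‖Φ * M‖ = ‖M‖ := by
  have h : ‖Φ * M‖ * ‖Φ * M‖ = ‖M‖ * ‖M‖ := by
    rw [← Matrix.l2_opNorm_conjTranspose_mul_self, ← Matrix.l2_opNorm_conjTranspose_mul_self M]
    congr 1
    rw [Matrix.conjTranspose_mul]
    calc Mᴴ * Φᴴ * (Φ * M) = Mᴴ * (Φᴴ * Φ) * M := by noncomm_ring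
    _ = Mᴴ * M := by rw [hΦ]; noncomm_ring
  exact (mul_self_inj (norm_nonneg _) (norm_nonneg _)).mp h

lemma euclid_norm_sq {k : ℕ} (v : Fin k → ℝ) :
    ‖(EuclideanSpace.equiv (Fin k) ℝ).symm v‖ * ‖(EuclideanSpace.equiv (Fin k) ℝ).symm v‖
      = v ⬝ᵥ v := by
  rw [← real_inner_self_eq_norm_mul_norm]
  simp [PiLp.inner_apply, dotProduct, mul_comm]
  rw [EuclideanSpace.norm_sq_eq]; simp [sq]

/-- `‖(S+1)⁻¹‖ ≤ 1` for `S` positive semidefinite. -/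
lemma norm_inv_add_one_le {k : ℕ} {S : Matrix (Fin k) (Fin k) ℝ} (hS : S.PosSemidef)
    (hU : IsUnit (S + 1)) : ‖(S + 1)⁻¹‖ ≤ 1 := by
  have hUd : IsUnit (S + 1).det := (Matrix.isUnit_iff_isUnit_det _).mp hU
  rw [norm_fCLM]
  refine ContinuousLinearMap.opNorm_le_bound _ zero_le_one fun y => ?_
  rw [one_mul]
  set v : Fin k → ℝ := (S + 1)⁻¹ *ᵥ (EuclideanSpace.equiv (Fin k) ℝ y) with hv
  have hyv : (EuclideanSpace.equiv (Fin k) ℝ y) = (S + 1) *ᵥ v := by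
    rw [hv, Matrix.mulVec_mulVec, Matrix.mul_nonsing_inv _ hUd, Matrix.one_mulVec]
  have hy : y = (EuclideanSpace.equiv (Fin k) ℝ).symm ((S + 1) *ᵥ v) := by
    rw [← hyv]; simp
  have key : v ⬝ᵥ v ≤ ((S + 1) *ᵥ v) ⬝ᵥ ((S + 1) *ᵥ v) := by
    have hexp : (S + 1) *ᵥ v = S *ᵥ v + v := by
      rw [Matrix.add_mulVec, Matrix.one_mulVec]
    rw [hexp]
    have h1 : 0 ≤ (S *ᵥ v) ⬝ᵥ (S *ᵥ v) :=
      Finset.sum_nonneg fun i _ => mul_self_nonneg _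
    have h2 : 0 ≤ v ⬝ᵥ (S *ᵥ v) := by simpa using hS.dotProduct_mulVec_nonneg v
    have h3 : (S *ᵥ v) ⬝ᵥ v = v ⬝ᵥ (S *ᵥ v) := dotProduct_comm _ _
    rw [add_dotProduct, dotProduct_add, dotProduct_add, h3]
    linarith
  have hfy : fCLM (S + 1)⁻¹ y = (EuclideanSpace.equiv (Fin k) ℝ).symm v := by
    rw [fCLM_apply, hv]
  rw [hfy, hy]
  have h1 := euclid_norm_sq v
  have h2 := euclid_norm_sq ((S + 1) *ᵥ v)
  nlinarith [norm_nonneg ((EuclideanSpace.equiv (Fin k) ℝ).symm v),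
    norm_nonneg ((EuclideanSpace.equiv (Fin k) ℝ).symm ((S + 1) *ᵥ v))]

end LinearDistortionAux

open LinearDistortionAux in
open scoped Matrix.Norms.L2Operator in
open scoped MatrixOrder in
/-- **Linear distortion bound.**  If `P̃ᵀP̃ = PᵀP + E` with `P, P̃` non-degenerate,
there is a linear isometry `Φ` with `‖P̃P⁻¹ − Φ‖ ≤ σ₁(E)/σ_k(P)²`. -/
theorem linear_distortion_bound {k : ℕ} (P Pt : Matrix (Fin k) (Fin k) ℝ)
    (hP : IsUnit P) (hPt : IsUnit Pt)
    (E : Matrix (Fin k) (Fin k) ℝ) (hE : Ptᵀ * Pt = Pᵀ * P + E) :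
    ∃ Φ : Matrix (Fin k) (Fin k) ℝ, Φᵀ * Φ = 1 ∧
      largestSing (Pt * P⁻¹ - Φ) ≤ largestSing E / smallestSing P ^ 2 := by
  rcases Nat.eq_zero_or_pos k with rfl | hk
  · refine ⟨1, by simp, ?_⟩
    have hempty : ∀ M : Matrix (Fin 0) (Fin 0) ℝ,
        { r : ℝ | ∃ x : EuclideanSpace ℝ (Fin 0), ‖x‖ = 1 ∧
          r = ‖(EuclideanSpace.equiv (Fin 0) ℝ).symm (M.mulVec (EuclideanSpace.equiv (Fin 0) ℝ x))‖ }
          = (∅ : Set ℝ) := by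
      intro M
      ext r
      simp only [Set.mem_setOf_eq, Set.mem_empty_iff_false, iff_false, not_exists]
      rintro x ⟨hx, -⟩
      have : x = 0 := Subsingleton.elim _ _
      rw [this] at hx; simp at hx
    have h1 : largestSing (Pt * P⁻¹ - 1) = 0 := by rw [largestSing, hempty, Real.sSup_empty]
    have h2 : largestSing E = 0 := by rw [largestSing, hempty, Real.sSup_empty]
    have h3 : smallestSing P = 0 := by rw [smallestSing, hempty, Real.sInf_empty]
    rw [h1, h2, h3]
    simp
  · -- main case
    have hPd : IsUnit P.det := (Matrix.isUnit_iff_isUnit_det _).mp hP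
    have hPtd : IsUnit Pt.det := (Matrix.isUnit_iff_isUnit_det _).mp hPt
    set A : Matrix (Fin k) (Fin k) ℝ := Pt * P⁻¹ with hAdef
    have hAd : IsUnit A.det := by
      rw [hAdef, Matrix.det_mul]
      exact hPtd.mul (Matrix.isUnit_nonsing_inv_det P hPd)
    set B : Matrix (Fin k) (Fin k) ℝ := Aᴴ * A with hBdef
    have hBpsd : B.PosSemidef := Matrix.posSemidef_conjTranspose_mul_self A
    set S : Matrix (Fin k) (Fin k) ℝ := CFC.sqrt B with hSdef
    have hSS : S * S = B := CFC.sqrt_mul_sqrt_self B hBpsd.nonneg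
    have hSpsd : S.PosSemidef := (CFC.sqrt_nonneg B).posSemidef
    have hSH : Sᴴ = S := hSpsd.1
    have hSd : IsUnit S.det := by
      have hBd : IsUnit B.det := by
        rw [hBdef, Matrix.det_mul, real_ct, Matrix.det_transpose]
        exact hAd.mul hAd
      have : IsUnit (S.det * S.det) := by rw [← Matrix.det_mul, hSS]; exact hBd
      exact isUnit_of_mul_isUnit_left this
    set Φ : Matrix (Fin k) (Fin k) ℝ := A * S⁻¹ with hΦdef
    have hΦorth : Φᴴ * Φ = 1 := by
      rw [hΦdef, Matrix.conjTranspose_mul, Matrix.conjTranspose_nonsing_inv, hSH]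
      calc S⁻¹ * Aᴴ * (A * S⁻¹) = S⁻¹ * (Aᴴ * A) * S⁻¹ := by noncomm_ring
      _ = S⁻¹ * (S * S) * S⁻¹ := by rw [hSS, ← hBdef]
      _ = (S⁻¹ * S) * (S * S⁻¹) := by noncomm_ring
      _ = 1 := by rw [Matrix.nonsing_inv_mul _ hSd, Matrix.mul_nonsing_inv _ hSd, one_mul]
    have hΦS : Φ * S = A := by
      rw [hΦdef, Matrix.mul_assoc A S⁻¹ S, Matrix.nonsing_inv_mul _ hSd, Matrix.mul_one]
    have hAΦ : A - Φ = Φ * (S - 1) := by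
      rw [Matrix.mul_sub, hΦS, Matrix.mul_one]
    have hB1 : B - 1 = (P⁻¹)ᵀ * E * P⁻¹ := by
      have h1 : (P⁻¹)ᵀ * Pᵀ = 1 := by
        rw [← Matrix.transpose_mul, Matrix.mul_nonsing_inv _ hPd, Matrix.transpose_one]
      have h2 : P * P⁻¹ = 1 := Matrix.mul_nonsing_inv _ hPd
      calc B - 1 = (P⁻¹)ᵀ * Ptᵀ * (Pt * P⁻¹) - 1 := by
            rw [hBdef, hAdef, real_ct, Matrix.transpose_mul]
      _ = (P⁻¹)ᵀ * (Ptᵀ * Pt) * P⁻¹ - 1 := by noncomm_ring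
      _ = (P⁻¹)ᵀ * (Pᵀ * P) * P⁻¹ + (P⁻¹)ᵀ * E * P⁻¹ - 1 := by rw [hE]; noncomm_ring
      _ = ((P⁻¹)ᵀ * Pᵀ) * (P * P⁻¹) + (P⁻¹)ᵀ * E * P⁻¹ - 1 := by noncomm_ring
      _ = (P⁻¹)ᵀ * E * P⁻¹ := by rw [h1, h2]; noncomm_ring
    have hSum : (S + 1).PosDef := Matrix.PosDef.posSemidef_add hSpsd Matrix.PosDef.one
    have hSumU : IsUnit (S + 1) := hSum.isUnit
    have hSumd : IsUnit (S + 1).det := (Matrix.isUnit_iff_isUnit_det _).mp hSumU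
    have hS1 : S - 1 = (S + 1)⁻¹ * (B - 1) := by
      have hprod : (S + 1) * (S - 1) = B - 1 := by rw [← hSS]; noncomm_ring
      rw [← hprod, ← Matrix.mul_assoc, Matrix.nonsing_inv_mul _ hSumd, Matrix.one_mul]
    -- norms
    have hs := smallestSing_pos hk hP
    have hPinv : ‖P⁻¹‖ ≤ 1 / smallestSing P := norm_inv_le hk hP
    have hPinvT : ‖(P⁻¹)ᵀ‖ = ‖P⁻¹‖ := by
      rw [← real_ct, Matrix.l2_opNorm_conjTranspose]
    have chain : ‖A - Φ‖ ≤ ‖E‖ * (1 / smallestSing P) * (1 / smallestSing P) := by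
      calc ‖A - Φ‖ = ‖S - 1‖ := by rw [hAΦ, norm_orth_mul hΦorth]
      _ = ‖(S + 1)⁻¹ * (B - 1)‖ := by rw [hS1]
      _ ≤ ‖(S + 1)⁻¹‖ * ‖B - 1‖ := Matrix.l2_opNorm_mul _ _
      _ ≤ 1 * ‖B - 1‖ := by
            exact mul_le_mul_of_nonneg_right (norm_inv_add_one_le hSpsd hSumU) (norm_nonneg _)
      _ = ‖(P⁻¹)ᵀ * E * P⁻¹‖ := by rw [one_mul, hB1]
      _ ≤ ‖(P⁻¹)ᵀ * E‖ * ‖P⁻¹‖ := Matrix.l2_opNorm_mul _ _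
      _ ≤ ‖(P⁻¹)ᵀ‖ * ‖E‖ * ‖P⁻¹‖ := by
            exact mul_le_mul_of_nonneg_right (Matrix.l2_opNorm_mul _ _) (norm_nonneg _)
      _ = ‖E‖ * ‖P⁻¹‖ * ‖P⁻¹‖ := by rw [hPinvT]; ring
      _ ≤ ‖E‖ * (1 / smallestSing P) * (1 / smallestSing P) := by
            gcongr
    refine ⟨Φ, by rw [← real_ct]; exact hΦorth, ?_⟩
    rw [largestSing_eq_norm hk, largestSing_eq_norm hk]
    calc ‖A - Φ‖ ≤ ‖E‖ * (1 / smallestSing P) * (1 / smallestSing P) := chain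
    _ = ‖E‖ / smallestSing P ^ 2 := by rw [mul_one_div, mul_one_div, div_div, ← pow_two]
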